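/- Let p be an odd prime, let n ≥ 1, and let a₁, a₂, …, a_n be positive integers with T := a₁ + a₂ + ⋯ + a_n ≤ 2(p−1). Consider the rational number S := Σ_{j=0}^{p−1} [ Π_{i=1}^{n} (j+1)_{a_i} ] · [ j · Σ_{i=1}^{n} ( H^{(1)}_{a_i + j} − H^{(1)}_{j} ) + (j²/2) · ( ( Σ_{i=1}^{n} ( H^{(1)}_{a_i + j} − H^{(1)}_{j} ) )² − Σ_{i=1}^{n} ( H^{(2)}_{a_i + j} − H^{(2)}_{j} ) ) ]. Viewed in ℚ_p, S ∈ pℤ_p if T < 2(p−1), and S + 1 ∈ pℤ_p if T = 2(p−1). -/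

import Mathlib

/-- The generalized harmonic sum `H⁽ⁱ⁾_n = ∑_{j=1}^{n} 1/jⁱ`. -/
def harmonic' (i n : ℕ) : ℚ := ∑ j ∈ Finset.Icc 1 n, 1 / (j : ℚ) ^ i

/-- The rising factorial `(a)ₖ = a(a+1)⋯(a+k-1)` in `ℚ`. -/
def risingFacQ (a : ℚ) (k : ℕ) : ℚ := ∏ t ∈ Finset.range k, (a + t)

lemma harmonic'_sub (i j m : ℕ) :
    harmonic' i (m + j) - harmonic' i j
      = ∑ t ∈ Finset.range m, 1 / ((j : ℚ) + 1 + t) ^ i := by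
  have h1 : ∀ n : ℕ, harmonic' i n = ∑ t ∈ Finset.Ioc 0 n, 1 / (t : ℚ) ^ i := by
    intro n; rw [harmonic', ← Finset.Icc_add_one_left_eq_Ioc]; rfl
  rw [h1, h1]
  have h2 := Finset.sum_Ioc_consecutive (fun t : ℕ => 1 / (t : ℚ) ^ i)
    (Nat.zero_le j) (Nat.le_add_left j m)
  rw [← h2, add_sub_cancel_left]
  have h3 : Finset.Ioc j (m + j) = Finset.Ico (j+1) (j+1+m) := by
    ext t; simp only [Finset.mem_Ioc, Finset.mem_Ico]; omega
  rw [h3, Finset.sum_Ico_eq_sum_range]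
  have : j + 1 + m - (j+1) = m := by omega
  rw [this]
  apply Finset.sum_congr rfl
  intro t _
  push_cast
  ring_nf

lemma zmod_sum_pow (p : ℕ) [hp : Fact p.Prime] (k : ℕ) (hk : k ≠ 0) :
    ∑ x : ZMod p, x ^ k = if (p - 1) ∣ k then -1 else 0 := by
  classical
  have hcard : Fintype.card (ZMod p) = p := ZMod.card p
  have := FiniteField.sum_pow_units (ZMod p) k
  rw [hcard] at this
  rw [← this]
  let φ : (ZMod p)ˣ ↪ ZMod p := ⟨fun x ↦ x, fun _ _ h ↦ Units.ext h⟩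
  have huniv : Finset.univ.map φ = Finset.univ \ {0} := by
    ext x
    simp only [Finset.mem_map, Finset.mem_univ, Function.Embedding.coeFn_mk, true_and,
      Finset.mem_sdiff, Finset.mem_singleton, φ]
    exact isUnit_iff_ne_zero
  calc
    ∑ x : ZMod p, x ^ k = ∑ x ∈ Finset.univ \ {(0 : ZMod p)}, x ^ k := by
      rw [← Finset.sum_sdiff ({0} : Finset (ZMod p)).subset_univ, Finset.sum_singleton,
        zero_pow hk, add_zero]
    _ = ∑ x : (ZMod p)ˣ, (x : ZMod p) ^ k := by
      rw [← huniv, Finset.sum_map]; rfl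

lemma sum_range_pow_zmod (p : ℕ) [hp : Fact p.Prime] (k : ℕ) :
    ∑ j ∈ Finset.range p, ((j : ZMod p)) ^ k = ∑ x : ZMod p, x ^ k := by
  haveI : NeZero p := ⟨hp.out.ne_zero⟩
  refine Finset.sum_nbij' (fun j => ((j : ZMod p))) (fun x => x.val) ?_ ?_ ?_ ?_ ?_
  · intro a _; exact Finset.mem_univ _
  · intro x _; exact Finset.mem_range.mpr (ZMod.val_lt x)
  · intro a ha; exact ZMod.val_cast_of_lt (Finset.mem_range.mp ha)
  · intro x _; exact ZMod.natCast_rightInverse x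
  · intro a _; rfl

lemma derivative_finset_prod {R : Type*} [CommRing R] {ι : Type*} [DecidableEq ι]
    (s : Finset ι) (f : ι → Polynomial R) :
    Polynomial.derivative (∏ i ∈ s, f i)
      = ∑ i ∈ s, (∏ j ∈ s.erase i, f j) * Polynomial.derivative (f i) := by
  induction s using Finset.induction with
  | empty => simp
  | @insert a s hanotin ih =>
    rw [Finset.prod_insert hanotin, Polynomial.derivative_mul, ih, Finset.sum_insert hanotin,
      Finset.erase_insert hanotin, Finset.mul_sum]
    congr 1
    · exact mul_comm _ _
    refine Finset.sum_congr rfl fun i hi => ?_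
    have hne : i ≠ a := fun h => hanotin (h ▸ hi)
    rw [Finset.erase_insert_of_ne hne.symm, Finset.prod_insert (fun h => hanotin (Finset.erase_subset _ _ h))]
    ring

open Polynomial in
/-- Lemma 3.11: for an odd prime `p` and positive integers `a₁, …, a_n` with
`T = a₁ + ⋯ + a_n ≤ 2(p-1)`, the sum
`∑_{j=0}^{p-1} [∏ᵢ (j+1)_{aᵢ}] [j ∑ᵢ (H⁽¹⁾_{aᵢ+j} - H⁽¹⁾_j)
  + (j²/2) {(∑ᵢ (H⁽¹⁾_{aᵢ+j} - H⁽¹⁾_j))² - ∑ᵢ (H⁽²⁾_{aᵢ+j} - H⁽²⁾_j)}]`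
is `≡ 0 (mod p)` if `T < 2(p-1)` and `≡ -1 (mod p)` if `T = 2(p-1)`. -/
theorem stmt5 (p : ℕ) [hp : Fact p.Prime] (hodd : p ≠ 2)
    (n : ℕ) (hn : 1 ≤ n) (a : Fin n → ℕ) (ha : ∀ i, 0 < a i)
    (hT : ∑ i, a i ≤ 2 * (p - 1))
    (S : ℚ)
    (hS : S = ∑ j ∈ Finset.range p,
        (∏ i, risingFacQ ((j : ℚ) + 1) (a i)) *
          ((j : ℚ) * ∑ i, (harmonic' 1 (a i + j) - harmonic' 1 j)
            + (j : ℚ) ^ 2 / 2 *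
              ((∑ i, (harmonic' 1 (a i + j) - harmonic' 1 j)) ^ 2
                - ∑ i, (harmonic' 2 (a i + j) - harmonic' 2 j)))) :
    (∑ i, a i < 2 * (p - 1) → ∃ z : ℤ_[p], (S : ℚ_[p]) = (p : ℚ_[p]) * (z : ℚ_[p])) ∧
    (∑ i, a i = 2 * (p - 1) → ∃ z : ℤ_[p], (S : ℚ_[p]) + 1 = (p : ℚ_[p]) * (z : ℚ_[p])) := by
  classical
  set T := ∑ i, a i with hTdef
  have hp2 : 2 ≤ p := hp.out.two_le
  have hp3 : 3 ≤ p := by omega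
  have hT1 : 1 ≤ T := by
    calc 1 ≤ n := hn
    _ = ∑ _i : Fin n, 1 := by simp
    _ ≤ T := Finset.sum_le_sum fun i _ => ha i
  -- the index set
  set I : Finset ((_ : Fin n) × ℕ) := Finset.univ.sigma (fun i => Finset.range (a i)) with hI
  have hIcard : I.card = T := by
    rw [hI, Finset.card_sigma]
    simp [hTdef]
  -- the integer polynomial ∏ (X + (t+1))
  set Fz : Polynomial ℤ := ∏ x ∈ I, (X + C ((x.2 : ℤ) + 1)) with hFz
  have hFzmonic : Fz.Monic :=
    monic_prod_of_monic _ _ (fun x _ => monic_X_add_C _)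
  have hFzdeg : Fz.natDegree = T := by
    rw [hFz, natDegree_prod _ _ (fun x _ => (monic_X_add_C ((x.2 : ℤ) + 1)).ne_zero)]
    rw [Finset.sum_congr rfl (fun (x : (_ : Fin n) × ℕ) _ => natDegree_X_add_C ((x.2 : ℤ) + 1))]
    simp [hIcard]
  set f : Polynomial ℚ := Fz.map (Int.castRingHom ℚ) with hf
  have hfprod : f = ∏ x ∈ I, (X + C ((x.2 : ℚ) + 1)) := by
    rw [hf, hFz, Polynomial.map_prod]
    refine Finset.prod_congr rfl fun x _ => ?_
    simp
  have hfc : ∀ k, f.coeff k = ((Fz.coeff k : ℤ) : ℚ) := fun k => by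
    rw [hf, coeff_map]; rfl
  have hfdeg : f.natDegree = T := by
    rw [hf, hFzmonic.natDegree_map, hFzdeg]
  -- Step A : pointwise identity
  have stepA : ∀ j : ℕ,
      (∏ i, risingFacQ ((j : ℚ) + 1) (a i)) *
          ((j : ℚ) * ∑ i, (harmonic' 1 (a i + j) - harmonic' 1 j)
            + (j : ℚ) ^ 2 / 2 *
              ((∑ i, (harmonic' 1 (a i + j) - harmonic' 1 j)) ^ 2
                - ∑ i, (harmonic' 2 (a i + j) - harmonic' 2 j)))
      = eval (j : ℚ) (derivative f) * (j : ℚ)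
          + 1/2 * (eval (j : ℚ) (derivative (derivative f)) * (j : ℚ)^2) := by
    intro j
    set v : ((_ : Fin n) × ℕ) → ℚ := fun x => (j : ℚ) + ((x.2 : ℚ) + 1) with hv
    have hvne : ∀ x : ((_ : Fin n) × ℕ), v x ≠ 0 := by
      intro x; rw [hv]; positivity
    have hprod : (∏ i, risingFacQ ((j : ℚ) + 1) (a i)) = ∏ x ∈ I, v x := by
      rw [hI, Finset.prod_sigma]
      refine Finset.prod_congr rfl fun i _ => ?_
      rw [risingFacQ]
      refine Finset.prod_congr rfl fun t _ => ?_
      rw [hv]; ring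
    have hL : (∑ i, (harmonic' 1 (a i + j) - harmonic' 1 j)) = ∑ x ∈ I, (v x)⁻¹ := by
      rw [hI, Finset.sum_sigma]
      refine Finset.sum_congr rfl fun i _ => ?_
      rw [harmonic'_sub]
      refine Finset.sum_congr rfl fun t _ => ?_
      rw [pow_one, one_div, hv]
      ring_nf
    have hM : (∑ i, (harmonic' 2 (a i + j) - harmonic' 2 j)) = ∑ x ∈ I, ((v x)⁻¹)^2 := by
      rw [hI, Finset.sum_sigma]
      refine Finset.sum_congr rfl fun i _ => ?_
      rw [harmonic'_sub]
      refine Finset.sum_congr rfl fun t _ => ?_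
      rw [hv, one_div, inv_pow]
      ring_nf
    have hevx : ∀ x : ((_ : Fin n) × ℕ), eval (j : ℚ) (X + C ((x.2 : ℚ) + 1)) = v x := by
      intro x; simp [hv]
    have herase : ∀ x ∈ I, ∏ y ∈ I.erase x, v y = (∏ y ∈ I, v y) * (v x)⁻¹ := by
      intro x hx
      rw [eq_comm, mul_inv_eq_iff_eq_mul₀ (hvne x), Finset.prod_erase_mul _ _ hx]
    have hd1 : eval (j : ℚ) (derivative f)
        = (∏ x ∈ I, v x) * (∑ x ∈ I, (v x)⁻¹) := by
      rw [hfprod, derivative_finset_prod]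
      simp only [derivative_add, derivative_X, derivative_C, add_zero, mul_one]
      rw [eval_finset_sum]
      rw [Finset.mul_sum]
      refine Finset.sum_congr rfl fun x hx => ?_
      rw [eval_prod]
      simp only [hevx]
      exact herase x hx
    have hd2 : eval (j : ℚ) (derivative (derivative f))
        = (∏ x ∈ I, v x) *
            ((∑ x ∈ I, (v x)⁻¹)^2 - ∑ x ∈ I, ((v x)⁻¹)^2) := by
      rw [hfprod, derivative_finset_prod]
      simp only [derivative_add, derivative_X, derivative_C, add_zero, mul_one]
      rw [derivative_sum]
      rw [eval_finset_sum]
      have hinner : ∀ x ∈ I, eval (j : ℚ) (derivative (∏ y ∈ I.erase x, (X + C ((y.2 : ℚ) + 1))))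
          = (∏ y ∈ I, v y) * ((v x)⁻¹ * ((∑ y ∈ I, (v y)⁻¹) - (v x)⁻¹)) := by
        intro x hx
        rw [derivative_finset_prod]
        simp only [derivative_add, derivative_X, derivative_C, add_zero, mul_one]
        rw [eval_finset_sum]
        have : ∀ y ∈ I.erase x, eval (j : ℚ) (∏ z ∈ (I.erase x).erase y, (X + C ((z.2 : ℚ) + 1)))
            = (∏ z ∈ I, v z) * (v x)⁻¹ * (v y)⁻¹ := by
          intro y hy
          rw [eval_prod]
          simp only [hevx]
          rw [eq_comm, mul_inv_eq_iff_eq_mul₀ (hvne y), Finset.prod_erase_mul _ _ hy,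
            herase x hx]
        rw [Finset.sum_congr rfl this, ← Finset.mul_sum,
          Finset.sum_erase_eq_sub (f := fun y => (v y)⁻¹) hx]
        ring
      rw [Finset.sum_congr rfl hinner, ← Finset.mul_sum]
      congr 1
      have h4 : ∀ x ∈ I, (v x)⁻¹ * ((∑ y ∈ I, (v y)⁻¹) - (v x)⁻¹)
          = (v x)⁻¹ * (∑ y ∈ I, (v y)⁻¹) - ((v x)⁻¹)^2 := fun x _ => by ring
      rw [Finset.sum_congr rfl h4, Finset.sum_sub_distrib, ← Finset.sum_mul]
      ring
    rw [hprod, hL, hM, hd1, hd2]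
    ring
  -- combined polynomial G
  set G : Polynomial ℚ :=
    derivative f * X ^ 1 + C (1/2 : ℚ) * (derivative (derivative f) * X ^ 2) with hG
  have hd1T : (derivative f).natDegree ≤ T :=
    le_trans (natDegree_derivative_le f) (by rw [hfdeg]; omega)
  have hd2T : (derivative (derivative f)).natDegree ≤ T :=
    le_trans (natDegree_derivative_le _) (by omega)
  have hGdeg : G.natDegree < T + 3 := by
    have h1 : (derivative f * X ^ 1).natDegree ≤ T + 1 := by
      refine le_trans natDegree_mul_le ?_
      simp only [natDegree_X_pow]
      omega
    have h2a : (derivative (derivative f) * X ^ 2).natDegree ≤ T + 2 := by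
      refine le_trans natDegree_mul_le ?_
      simp only [natDegree_X_pow]
      omega
    have h2 : (C (1/2 : ℚ) * (derivative (derivative f) * X ^ 2)).natDegree ≤ T + 2 := by
      refine le_trans natDegree_mul_le ?_
      simp only [natDegree_C]
      omega
    refine lt_of_le_of_lt (natDegree_add_le _ _) ?_
    omega
  have hGeval : ∀ j : ℕ, eval (j : ℚ) G
      = eval (j : ℚ) (derivative f) * (j : ℚ)
          + 1/2 * (eval (j : ℚ) (derivative (derivative f)) * (j : ℚ)^2) := by
    intro j
    rw [hG]
    simp only [eval_add, eval_mul, eval_pow, eval_C, eval_X]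
    ring
  have hdivcast : ∀ m : ℕ, ((m * (m + 1) / 2 : ℕ) : ℚ) = (m : ℚ) * ((m : ℚ) + 1) / 2 := by
    intro m
    rw [Nat.cast_div (Nat.even_mul_succ_self m).two_dvd (by norm_num)]
    push_cast
    ring
  have hGcoeff : ∀ k, G.coeff k = ((Fz.coeff k : ℤ) : ℚ) * ((k * (k + 1) / 2 : ℕ) : ℚ) := by
    intro k
    rw [hG, coeff_add, coeff_mul_X_pow', coeff_C_mul, coeff_mul_X_pow', hdivcast]
    match k with
    | 0 => norm_num
    | 1 =>
      norm_num
      rw [coeff_derivative, hfc]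
      push_cast
      ring
    | (l+2) =>
      rw [if_pos (by omega), if_pos (by omega)]
      have e1 : l + 2 - 1 = l + 1 := by omega
      have e2 : l + 2 - 2 = l := by omega
      rw [e1, e2, coeff_derivative, coeff_derivative, coeff_derivative, hfc]
      have e3 : l + 1 + 1 = l + 2 := by omega
      rw [e3]
      push_cast
      ring
  -- rewrite S as coefficient sum
  have hS2 : S = ∑ k ∈ Finset.range (T+3), G.coeff k * ∑ j ∈ Finset.range p, (j : ℚ)^k := by
    rw [hS]
    have hterm : ∀ j ∈ Finset.range p,
        (∏ i, risingFacQ ((j : ℚ) + 1) (a i)) *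
          ((j : ℚ) * ∑ i, (harmonic' 1 (a i + j) - harmonic' 1 j)
            + (j : ℚ) ^ 2 / 2 *
              ((∑ i, (harmonic' 1 (a i + j) - harmonic' 1 j)) ^ 2
                - ∑ i, (harmonic' 2 (a i + j) - harmonic' 2 j)))
        = ∑ k ∈ Finset.range (T+3), G.coeff k * (j : ℚ)^k := by
      intro j _
      rw [stepA j, ← hGeval j, eval_eq_sum_range' hGdeg]
    rw [Finset.sum_congr rfl hterm, Finset.sum_comm]
    exact Finset.sum_congr rfl fun k _ => (Finset.mul_sum _ _ _).symm
  -- the integer avatar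
  set W : ℕ → ℕ := fun k => k * (k + 1) / 2 with hW
  set P : ℕ → ℕ := fun k => ∑ j ∈ Finset.range p, j^k with hP
  set N : ℤ := ∑ k ∈ Finset.range (T+3), Fz.coeff k * (W k : ℤ) * (P k : ℤ) with hN
  have hSN : (N : ℚ) = S := by
    rw [hS2, hN]
    push_cast
    refine Finset.sum_congr rfl fun k _ => ?_
    rw [hGcoeff k, hdivcast]
    simp only [hP]
    push_cast
    ring
  -- p-adic / mod-p analysis
  have hPmod : ∀ k : ℕ, k ≠ 0 → ((P k : ℕ) : ZMod p) = if (p - 1) ∣ k then -1 else 0 := by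
    intro k hk
    rw [hP]
    push_cast
    rw [sum_range_pow_zmod p k, zmod_sum_pow p k hk]
  have hzero : ∀ k : ℕ, ¬(k = 2*(p-1) ∧ T = 2*(p-1)) →
      ((Fz.coeff k * (W k : ℤ) * (P k : ℤ) : ℤ) : ZMod p) = 0 := by
    intro k hk
    push_cast
    by_cases hkT : T < k
    · have hc0 : Fz.coeff k = 0 := coeff_eq_zero_of_natDegree_lt (by rw [hFzdeg]; exact hkT)
      rw [hc0]
      push_cast
      ring
    · push_neg at hkT
      by_cases hk0 : k = 0
      · subst hk0
        have : W 0 = 0 := by rw [hW]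
        rw [this]
        push_cast
        ring
      · by_cases hdvd : (p - 1) ∣ k
        · have hkpe : k = p - 1 := by
            obtain ⟨q, hq⟩ := hdvd
            have hq2 : q ≠ 0 := by rintro rfl; rw [mul_zero] at hq; exact hk0 hq
            have hq3 : q < 2 := by
              by_contra h
              push_neg at h
              have h5 : 2*(p-1) ≤ k := by
                rw [hq]
                calc 2*(p-1) = (p-1)*2 := by ring
                _ ≤ (p-1)*q := Nat.mul_le_mul_left _ h
              have hke : k = 2*(p-1) := le_antisymm (le_trans hkT hT) h5
              exact hk ⟨hke, le_antisymm hT (by omega)⟩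
            have : q = 1 := by omega
            rw [this, mul_one] at hq
            exact hq
          subst hkpe
          obtain ⟨m, hm⟩ : 2 ∣ (p - 1) := by
            have := hp.out.two_le
            have hodd' : p % 2 = 1 := Nat.odd_iff.mp (hp.out.odd_of_ne_two hodd)
            exact ⟨(p-1)/2, by omega⟩
          have hWkey : W (p - 1) = m * p := by
            rw [hW]
            show (p-1) * ((p-1) + 1) / 2 = m * p
            have hp1 : p - 1 + 1 = p := by omega
            rw [hp1, hm, show 2 * m * p = 2 * (m * p) by ring,
              Nat.mul_div_cancel_left _ (by norm_num)]
          rw [hWkey]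
          push_cast [ZMod.natCast_self]
          ring
        · have hP0 : ((P k : ℕ) : ZMod p) = 0 := by rw [hPmod k hk0, if_neg hdvd]
          rw [hP0]
          ring
  have hNzmod : (N : ZMod p) = if T = 2*(p-1) then -1 else 0 := by
    rw [hN, Int.cast_sum]
    by_cases hTT : T = 2*(p-1)
    · rw [if_pos hTT]
      rw [Finset.sum_eq_single_of_mem (2*(p-1))
        (Finset.mem_range.mpr (by omega)) (fun k _ hne => hzero k (fun h => hne h.1))]
      have hc : Fz.coeff (2*(p-1)) = 1 := by
        have := hFzmonic.coeff_natDegree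
        rwa [hFzdeg, hTT] at this
      have hp1 : (((p - 1 : ℕ)) : ZMod p) = -1 := by
        rw [Nat.cast_sub (by omega : 1 ≤ p)]
        simp [ZMod.natCast_self]
      have hW1 : ((W (2*(p-1)) : ℕ) : ZMod p) = 1 := by
        have hWkey : W (2*(p-1)) = (p-1) * (2*(p-1) + 1) := by
          rw [hW]
          show 2*(p-1) * (2*(p-1) + 1) / 2 = (p-1) * (2*(p-1)+1)
          rw [show 2*(p-1) * (2*(p-1) + 1) = 2 * ((p-1) * (2*(p-1)+1)) by ring,
            Nat.mul_div_cancel_left _ (by norm_num)]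
        rw [hWkey]
        push_cast [hp1]
        ring
      have hPv : ((P (2*(p-1)) : ℕ) : ZMod p) = -1 := by
        rw [hPmod _ (by omega), if_pos ⟨2, by ring⟩]
      push_cast [hc, hW1, hPv]
      ring
    · rw [if_neg hTT]
      exact Finset.sum_eq_zero fun k _ => hzero k (fun h => hTT h.2)
  -- conclude
  constructor
  · intro hlt
    have h0 : (N : ZMod p) = 0 := by rw [hNzmod, if_neg (by omega)]
    obtain ⟨m, hm⟩ := (ZMod.intCast_zmod_eq_zero_iff_dvd N p).mp h0
    refine ⟨(m : ℤ_[p]), ?_⟩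
    have hS' : (S : ℚ_[p]) = ((N : ℚ) : ℚ_[p]) := by rw [hSN]
    rw [hS', hm]
    push_cast
    ring
  · intro heq
    have h0 : ((N + 1 : ℤ) : ZMod p) = 0 := by
      push_cast
      rw [hNzmod, if_pos heq]
      ring
    obtain ⟨m, hm⟩ := (ZMod.intCast_zmod_eq_zero_iff_dvd (N+1) p).mp h0
    refine ⟨(m : ℤ_[p]), ?_⟩
    have hS' : (S : ℚ_[p]) = ((N : ℚ) : ℚ_[p]) := by rw [hSN]
    rw [hS']
    have : ((N : ℚ) : ℚ_[p]) + 1 = (((N + 1 : ℤ) : ℚ) : ℚ_[p]) := by push_cast; ring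
    rw [this, hm]
    push_cast
    ring
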